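/- For all integers n ≥ 1 and 0 ≤ l ≤ k ≤ n with n ≡ l (mod 2), the probability that the n-step walk has running maximum exactly k and endpoint l is P(M_n = k, S_n = l) = a_{n,k,l} · p^{(n+l)/2} · q^{(n−l)/2}, where a_{n,k,l} := C(n, (n+2k−l)/2) − C(n, (n+2k+2−l)/2). -/

import Mathlib

open Finset

/-- Probability weight of a single path of length `N`. -/
noncomputable def pathProb (p : ℝ) (N : ℕ) (x : Fin N → Bool) : ℝ :=
  p ^ (Finset.univ.filter (fun i => x i = true)).card *
    (1 - p) ^ (N - (Finset.univ.filter (fun i => x i = true)).card)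

open Classical in
/-- Probability of an event `E` for the `N`-step Bernoulli walk. -/
noncomputable def walkProb (p : ℝ) (N : ℕ) (E : Set (Fin N → Bool)) : ℝ :=
  ∑ x : Fin N → Bool, if x ∈ E then pathProb p N x else 0

/-- Partial sum `S_j` of the walk given by the path `x`. -/
def walkS (N : ℕ) (x : Fin N → Bool) (j : ℕ) : ℤ :=
  ∑ i ∈ Finset.univ.filter (fun i : Fin N => (i : ℕ) < j), (if x i then (1 : ℤ) else -1)

/-- Running maximum `M_N = max_{0 ≤ j ≤ N} S_j`. -/
def walkM (N : ℕ) (x : Fin N → Bool) : ℤ :=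
  (Finset.range (N + 1)).sup' Finset.nonempty_range_add_one (fun j => walkS N x j)

/-- `U_n(p) = P(M_n ≤ 1)`. -/
noncomputable def U (n : ℕ) (p : ℝ) : ℝ :=
  walkProb p n {x | walkM n x ≤ 1}

section Aux

variable {n : ℕ}

lemma walkS_zero (x : Fin n → Bool) : walkS n x 0 = 0 := by
  simp [walkS]

lemma walkS_succ (x : Fin n → Bool) (j : ℕ) (hj : j < n) :
    walkS n x (j + 1) = walkS n x j + (if x ⟨j, hj⟩ then 1 else -1) := by
  unfold walkS
  rw [show (univ.filter fun i : Fin n => (i : ℕ) < j + 1) =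
      insert ⟨j, hj⟩ (univ.filter fun i : Fin n => (i : ℕ) < j) by
    ext i
    simp only [mem_filter, mem_univ, true_and, mem_insert, Fin.ext_iff]
    omega]
  rw [Finset.sum_insert (by simp)]
  ring

lemma walkS_of_ge (x : Fin n → Bool) (j : ℕ) (hj : n ≤ j) : walkS n x j = walkS n x n := by
  unfold walkS
  congr 1
  ext i
  simp only [mem_filter, mem_univ, true_and]
  have := i.isLt
  omega

lemma walkS_step_le (x : Fin n → Bool) (j : ℕ) : walkS n x (j + 1) ≤ walkS n x j + 1 := by
  by_cases hj : j < n
  · rw [walkS_succ x j hj]; split <;> omega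
  · rw [walkS_of_ge x (j + 1) (by omega), walkS_of_ge x j (by omega)]; omega

lemma le_walkM (x : Fin n → Bool) (j : ℕ) (hj : j ≤ n) : walkS n x j ≤ walkM n x :=
  Finset.le_sup' (fun j => walkS n x j) (Finset.mem_range.mpr (by omega))

lemma ivt (f : ℕ → ℤ) (hstep : ∀ j, f (j + 1) ≤ f j + 1) (k : ℤ) (h0 : f 0 ≤ k) :
    ∀ J, k ≤ f J → ∃ j ≤ J, f j = k := by
  intro J
  induction J with
  | zero => intro h; exact ⟨0, le_refl _, le_antisymm h0 h⟩
  | succ J ih =>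
    intro h
    by_cases h' : k ≤ f J
    · obtain ⟨j, hj, hjk⟩ := ih h'; exact ⟨j, by omega, hjk⟩
    · exact ⟨J + 1, le_refl _, by have := hstep J; omega⟩

lemma exists_hit (x : Fin n → Bool) (k : ℤ) (hk : 0 ≤ k) (hM : k ≤ walkM n x) :
    ∃ j ≤ n, walkS n x j = k := by
  unfold walkM at hM
  obtain ⟨J, hJmem, hJ⟩ := Finset.exists_mem_eq_sup' (Finset.nonempty_range_add_one (n := n))
    (fun j => walkS n x j)
  have hJn : J ≤ n := by have := Finset.mem_range.mp hJmem; omega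
  rw [hJ] at hM
  have hkJ : k ≤ walkS n x J := hM
  obtain ⟨j, hj, hjk⟩ := ivt (fun j => walkS n x j) (walkS_step_le x) k
    (by show walkS n x 0 ≤ k; rw [walkS_zero]; exact hk) J hkJ
  exact ⟨j, le_trans hj hJn, hjk⟩

open Classical in
noncomputable def firstHit (n : ℕ) (k : ℤ) (x : Fin n → Bool) : ℕ :=
  if h : ∃ j, walkS n x j = k then Nat.find h else 0

lemma firstHit_spec {x : Fin n → Bool} {k : ℤ} (h : ∃ j, walkS n x j = k) :
    walkS n x (firstHit n k x) = k := by
  unfold firstHit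
  rw [dif_pos h]
  exact Nat.find_spec h

lemma firstHit_min {x : Fin n → Bool} {k : ℤ} (h : ∃ j, walkS n x j = k)
    {j : ℕ} (hj : j < firstHit n k x) : walkS n x j ≠ k := by
  unfold firstHit at hj
  rw [dif_pos h] at hj
  exact Nat.find_min h hj

lemma firstHit_le' {x : Fin n → Bool} {k : ℤ} {m : ℕ} (hm : walkS n x m = k) :
    firstHit n k x ≤ m := by
  unfold firstHit
  rw [dif_pos ⟨m, hm⟩]
  exact Nat.find_min' _ hm

noncomputable def reflPath (n : ℕ) (k : ℤ) (x : Fin n → Bool) : Fin n → Bool :=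
  fun i => if (i : ℕ) < firstHit n k x then x i else !(x i)

lemma reflS (x : Fin n → Bool) (k : ℤ) (h : ∃ j, walkS n x j = k) :
    ∀ j, j ≤ n → walkS n (reflPath n k x) j =
      if j ≤ firstHit n k x then walkS n x j else 2 * k - walkS n x j := by
  intro j
  induction j with
  | zero => intro _; rw [if_pos (Nat.zero_le _)]; rw [walkS_zero, walkS_zero]
  | succ j ih =>
    intro hj
    have hjn : j < n := hj
    have ihj := ih (by omega)
    rw [walkS_succ (reflPath n k x) j hjn, ihj, walkS_succ x j hjn]
    by_cases hcase : j + 1 ≤ firstHit n k x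
    · have hjτ : j < firstHit n k x := hcase
      rw [if_pos (by omega : j ≤ firstHit n k x), if_pos hcase]
      have : reflPath n k x ⟨j, hjn⟩ = x ⟨j, hjn⟩ := by
        simp only [reflPath]
        rw [if_pos (by simpa using hjτ)]
      rw [this]
    · have hτj : firstHit n k x ≤ j := by omega
      rw [if_neg hcase]
      have hstep : reflPath n k x ⟨j, hjn⟩ = !(x ⟨j, hjn⟩) := by
        simp only [reflPath]
        rw [if_neg (by simp; omega)]
      rw [hstep]
      rcases eq_or_lt_of_le hτj with heq | hlt
      · rw [if_pos (le_of_eq heq.symm)]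
        have hk : walkS n x j = k := by
          rw [← heq]; exact firstHit_spec h
        rw [hk]
        cases hxb : x ⟨j, hjn⟩ <;> simp <;> ring
      · rw [if_neg (by omega)]
        cases hxb : x ⟨j, hjn⟩ <;> simp <;> ring

lemma firstHit_refl (x : Fin n → Bool) (k : ℤ) (h : ∃ j, walkS n x j = k)
    (hτn : firstHit n k x ≤ n) : firstHit n k (reflPath n k x) = firstHit n k x := by
  have hyτ : walkS n (reflPath n k x) (firstHit n k x) = k := by
    rw [reflS x k h _ hτn, if_pos le_rfl]
    exact firstHit_spec h
  refine le_antisymm (firstHit_le' hyτ) ?_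
  by_contra hlt
  push_neg at hlt
  have hyj : walkS n (reflPath n k x) (firstHit n k (reflPath n k x)) = k :=
    firstHit_spec ⟨_, hyτ⟩
  have hxj : walkS n (reflPath n k x) (firstHit n k (reflPath n k x))
      = walkS n x (firstHit n k (reflPath n k x)) := by
    rw [reflS x k h _ (by omega), if_pos (by omega)]
  exact firstHit_min h hlt (by rw [← hxj]; exact hyj)

lemma refl_refl (x : Fin n → Bool) (k : ℤ) (h : ∃ j, walkS n x j = k)
    (hτn : firstHit n k x ≤ n) : reflPath n k (reflPath n k x) = x := by
  have hfh := firstHit_refl x k h hτn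
  funext i
  simp only [reflPath, hfh]
  split <;> simp

lemma walkS_n (x : Fin n → Bool) :
    walkS n x n = 2 * ((univ.filter fun i => x i = true).card : ℤ) - n := by
  unfold walkS
  rw [show (univ.filter fun i : Fin n => (i : ℕ) < n) = univ by
    ext i; simp [i.isLt]]
  rw [← Finset.sum_filter_add_sum_filter_not univ (fun i => x i = true)]
  have h1 : ∑ i ∈ univ.filter (fun i => x i = true), (if x i then (1 : ℤ) else -1)
      = ((univ.filter fun i => x i = true).card : ℤ) := by
    rw [Finset.sum_congr rfl (fun i hi => by
      simp only [mem_filter] at hi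
      rw [if_pos hi.2])]
    simp
  have h2 : ∑ i ∈ univ.filter (fun i => ¬(x i = true)), (if x i then (1 : ℤ) else -1)
      = -((univ.filter fun i => ¬(x i = true)).card : ℤ) := by
    rw [Finset.sum_congr rfl (fun i hi => by
      simp only [mem_filter] at hi
      rw [if_neg hi.2])]
    simp
  rw [h1, h2]
  have h3 : (univ.filter fun i => x i = true).card
      + (univ.filter fun i => ¬(x i = true)).card = n := by
    have := Finset.card_filter_add_card_filter_not
      (s := (univ : Finset (Fin n))) (p := fun i => x i = true)
    simpa using this
  omega

lemma card_trues (n u : ℕ) :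
    (univ.filter fun x : Fin n → Bool => (univ.filter fun i => x i = true).card = u).card
      = n.choose u := by
  classical
  have := Finset.card_powersetCard u (univ : Finset (Fin n))
  rw [Finset.card_univ, Fintype.card_fin] at this
  rw [← this]
  apply Finset.card_nbij' (i := fun x => univ.filter fun i => x i = true)
    (j := fun s i => decide (i ∈ s))
  · intro x hx
    simp only [mem_coe, mem_filter, mem_univ, true_and] at hx
    simp [Finset.mem_powersetCard, hx]
  · intro s hs
    simp only [mem_coe, Finset.mem_powersetCard] at hs
    simp only [mem_coe, mem_filter, mem_univ, true_and]
    rw [← hs.2]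
    congr 1
    ext i
    simp
  · intro x hx
    funext i
    by_cases h : x i = true <;> simp [h]
  · intro s hs
    ext i
    simp

lemma card_endpoint (n m : ℕ) (hpar : m % 2 = n % 2) :
    (univ.filter fun x : Fin n → Bool => walkS n x n = (m : ℤ)).card
      = n.choose ((n + m) / 2) := by
  classical
  rw [← card_trues n ((n + m) / 2)]
  congr 1
  ext x
  simp only [mem_filter, mem_univ, true_and]
  rw [walkS_n]
  constructor
  · intro hh; omega
  · intro hh; omega

lemma mem_hit (x : Fin n → Bool) (k : ℕ) (hM : (k : ℤ) ≤ walkM n x) :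
    (∃ j, walkS n x j = (k : ℤ)) ∧ firstHit n (k : ℤ) x ≤ n := by
  obtain ⟨j, hjn, hjk⟩ := exists_hit x k (by positivity) hM
  exact ⟨⟨j, hjk⟩, le_trans (firstHit_le' hjk) hjn⟩

lemma reflect_card (n k l : ℕ) (hlk : l ≤ k) :
    (univ.filter fun x : Fin n → Bool => (k : ℤ) ≤ walkM n x ∧ walkS n x n = (l : ℤ)).card
      = (univ.filter fun x : Fin n → Bool => walkS n x n = (2 * k - l : ℤ)).card := by
  classical
  apply Finset.card_nbij' (i := reflPath n (k : ℤ)) (j := reflPath n (k : ℤ))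
  · intro x hx
    simp only [mem_coe, mem_filter, mem_univ, true_and] at hx ⊢
    obtain ⟨h, hτn⟩ := mem_hit x k hx.1
    rw [reflS x _ h n le_rfl]
    by_cases hc : n ≤ firstHit n (k : ℤ) x
    · have hτ : firstHit n (k : ℤ) x = n := le_antisymm hτn hc
      have hkn' : walkS n x n = (k : ℤ) := by
        have := firstHit_spec h; rwa [hτ] at this
      rw [if_pos hc, hx.2]
      have hlk' : (l : ℤ) = (k : ℤ) := by rw [← hx.2, hkn']
      omega
    · rw [if_neg hc, hx.2]
  · intro y hy
    simp only [mem_coe, mem_filter, mem_univ, true_and] at hy ⊢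
    have hMy : (k : ℤ) ≤ walkM n y := by
      have h1 := le_walkM y n le_rfl
      have : (k : ℤ) ≤ walkS n y n := by rw [hy]; push_cast; omega
      omega
    obtain ⟨h, hτn⟩ := mem_hit y k hMy
    constructor
    · have hSτ : walkS n (reflPath n (k : ℤ) y) (firstHit n (k : ℤ) y) = (k : ℤ) := by
        rw [reflS y _ h _ hτn, if_pos le_rfl]
        exact firstHit_spec h
      calc (k : ℤ) = _ := hSτ.symm
        _ ≤ walkM n (reflPath n (k : ℤ) y) := le_walkM _ _ hτn
    · rw [reflS y _ h n le_rfl]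
      by_cases hc : n ≤ firstHit n (k : ℤ) y
      · have hτ : firstHit n (k : ℤ) y = n := le_antisymm hτn hc
        have hS : walkS n y n = (k : ℤ) := by
          have := firstHit_spec h; rwa [hτ] at this
        rw [if_pos hc, hS]
        rw [hS] at hy
        omega
      · rw [if_neg hc, hy]
        ring
  · intro x hx
    simp only [mem_coe, mem_filter, mem_univ, true_and] at hx
    obtain ⟨h, hτn⟩ := mem_hit x k hx.1
    exact refl_refl x _ h hτn
  · intro y hy
    simp only [mem_coe, mem_filter, mem_univ, true_and] at hy
    have hMy : (k : ℤ) ≤ walkM n y := by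
      have h1 := le_walkM y n le_rfl
      have : (k : ℤ) ≤ walkS n y n := by rw [hy]; push_cast; omega
      omega
    obtain ⟨h, hτn⟩ := mem_hit y k hMy
    exact refl_refl y _ h hτn

end Aux

/-- `P(M_n = k, S_n = l) = a_{n,k,l} p^{(n+l)/2} q^{(n−l)/2}` for `0 ≤ l ≤ k ≤ n`
with `n ≡ l (mod 2)`, where `a_{n,k,l} = C(n,(n+2k−l)/2) − C(n,(n+2k+2−l)/2)`. -/
theorem max_and_endpoint_prob (p : ℝ) (hp : p ∈ Set.Ioo (0 : ℝ) 1)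
    (n k l : ℕ) (hn : 1 ≤ n) (hlk : l ≤ k) (hkn : k ≤ n) (hpar : n % 2 = l % 2) :
    walkProb p n {x | walkM n x = (k : ℤ) ∧ walkS n x n = (l : ℤ)} =
      ((n.choose ((n + 2 * k - l) / 2) : ℝ) - (n.choose ((n + 2 * k + 2 - l) / 2) : ℝ)) *
        p ^ ((n + l) / 2) * (1 - p) ^ ((n - l) / 2) := by
  classical
  have hln : l ≤ n := le_trans hlk hkn
  -- the event as a finset
  set A := (univ.filter fun x : Fin n → Bool =>
    walkM n x = (k : ℤ) ∧ walkS n x n = (l : ℤ)) with hA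
  -- step 1: walkProb = card A * p^((n+l)/2) * q^((n-l)/2)
  have hwp : walkProb p n {x | walkM n x = (k : ℤ) ∧ walkS n x n = (l : ℤ)}
      = (A.card : ℝ) * (p ^ ((n + l) / 2) * (1 - p) ^ ((n - l) / 2)) := by
    have hstep1 : walkProb p n {x | walkM n x = (k : ℤ) ∧ walkS n x n = (l : ℤ)}
        = ∑ x ∈ A, pathProb p n x := by
      rw [walkProb, hA, Finset.sum_filter]
      apply Finset.sum_congr rfl
      intro x _
      congr 1
    rw [hstep1]
    rw [Finset.sum_congr rfl (fun x hx => by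
      simp only [hA, mem_filter, mem_univ, true_and] at hx
      have hT : (univ.filter fun i => x i = true).card = (n + l) / 2 := by
        have := walkS_n x
        rw [hx.2] at this
        omega
      have hT2 : n - (univ.filter fun i => x i = true).card = (n - l) / 2 := by
        omega
      rw [pathProb, hT2, hT])]
    rw [Finset.sum_const, nsmul_eq_mul]
  rw [hwp]
  -- step 2: counting
  have hsplit : (univ.filter fun x : Fin n → Bool =>
      (k : ℤ) ≤ walkM n x ∧ walkS n x n = (l : ℤ)).card
      = A.card + (univ.filter fun x : Fin n → Bool =>
        ((k + 1 : ℕ) : ℤ) ≤ walkM n x ∧ walkS n x n = (l : ℤ)).card := by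
    rw [hA, ← Finset.card_union_of_disjoint (by
      rw [Finset.disjoint_left]
      intro x hx1 hx2
      simp only [mem_filter, mem_univ, true_and] at hx1 hx2
      push_cast at hx1 hx2
      omega)]
    congr 1
    ext x
    simp only [mem_filter, mem_univ, true_and, mem_union]
    push_cast
    constructor
    · rintro ⟨h1, h2⟩
      rcases eq_or_lt_of_le h1 with heq | hlt
      · exact Or.inl ⟨heq.symm, h2⟩
      · exact Or.inr ⟨by omega, h2⟩
    · rintro (⟨h1, h2⟩ | ⟨h1, h2⟩)
      · exact ⟨le_of_eq h1.symm, h2⟩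
      · exact ⟨by omega, h2⟩
  have hc1 : (univ.filter fun x : Fin n → Bool =>
      (k : ℤ) ≤ walkM n x ∧ walkS n x n = (l : ℤ)).card = n.choose ((n + 2 * k - l) / 2) := by
    rw [reflect_card n k l hlk]
    have hcast : (2 * k - l : ℤ) = ((2 * k - l : ℕ) : ℤ) := by push_cast; omega
    rw [hcast, card_endpoint n (2 * k - l) (by omega)]
    congr 1
    omega
  have hc2 : (univ.filter fun x : Fin n → Bool =>
      ((k + 1 : ℕ) : ℤ) ≤ walkM n x ∧ walkS n x n = (l : ℤ)).card
      = n.choose ((n + 2 * k + 2 - l) / 2) := by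
    rw [reflect_card n (k + 1) l (by omega)]
    have hcast : (2 * ((k + 1 : ℕ) : ℤ) - (l : ℤ)) = ((2 * (k + 1) - l : ℕ) : ℤ) := by
      push_cast; omega
    rw [hcast, card_endpoint n (2 * (k + 1) - l) (by omega)]
    congr 1
    omega
  rw [hc1, hc2] at hsplit
  have hAcard : (A.card : ℝ) = (n.choose ((n + 2 * k - l) / 2) : ℝ)
      - (n.choose ((n + 2 * k + 2 - l) / 2) : ℝ) := by
    have : (n.choose ((n + 2 * k - l) / 2) : ℝ)
        = (A.card : ℝ) + (n.choose ((n + 2 * k + 2 - l) / 2) : ℝ) := by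
      exact_mod_cast congrArg (Nat.cast : ℕ → ℝ) hsplit
    linarith
  rw [hAcard]
  ring
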